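/- Fix an integer N ≥ 2 and a real x > 0. Define τ(n,N,x) as in Lemma 3 of the paper (the upper bound on patch size). Then as n → ∞: if N is odd, τ(n,N,x) ~ 2^{n+2} e^{-x}, and if N is even, τ(n,N,x) ~ 2^{n+1} e^{-x}. -/

import Mathlib

/-- Ball size `b_m(r)` for integer radius, with `b_m(r) = 1` for `r < 0` by convention. -/
def bb (m : ℕ) (r : ℤ) : ℕ :=
  if r < 0 then 1 else ∑ i ∈ Finset.range (r.toNat + 1), m.choose i

noncomputable def tau (n N : ℕ) (x : ℝ) : ℝ :=
  2 ^ (n + 1) * ∑ i ∈ Finset.range N,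
      Real.exp (-x * ((bb (n - 1) ((i : ℤ) - 1) + bb (n - 1) ((N : ℤ) - i - 1) : ℕ) : ℝ)
            / ((bb (n - 1) ⌊((N : ℚ) - 1) / 2⌋ + bb (n - 1) (⌈((N : ℚ) - 1) / 2⌉ - 1) : ℕ) : ℝ)
          + ((bb (n - 1) ((i : ℤ) - 1) + bb (n - 1) ((N : ℤ) - i - 1) : ℕ) : ℝ) / 2 ^ (n - 1))
    + 2 ^ (n + 1) *
      Real.exp (-x * ((bb (n - 1) ((N : ℤ) - 1) : ℕ) : ℝ)
            / ((bb (n - 1) ⌊((N : ℚ) - 1) / 2⌋ + bb (n - 1) (⌈((N : ℚ) - 1) / 2⌉ - 1) : ℕ) : ℝ)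
          + ((bb (n - 1) ((N : ℤ) - 1) : ℕ) : ℝ) / 2 ^ (n - 1))


open Filter

lemma bb_pos (p : ℕ) (r : ℤ) : 0 < bb p r := by
  unfold bb; split
  · norm_num
  · exact Finset.sum_pos' (fun i _ => Nat.zero_le _)
      ⟨0, Finset.mem_range.2 (Nat.succ_pos _), by simp⟩

lemma choose_le_bb (p : ℕ) (r : ℤ) (j : ℕ) (h : (j : ℤ) ≤ r) : p.choose j ≤ bb p r := by
  unfold bb
  rw [if_neg (by omega)]
  exact Finset.single_le_sum (f := fun i => p.choose i) (fun i _ => Nat.zero_le _)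
    (Finset.mem_range.2 (by omega))

lemma bb_le_poly_nat (p : ℕ) (r : ℤ) (K : ℕ) (h : r.toNat < K) :
    bb p r ≤ K * (p + 1) ^ (K - 1) := by
  have hK : 1 ≤ K := by omega
  have hp1 : 1 ≤ (p + 1) ^ (K - 1) := Nat.one_le_pow _ _ (by omega)
  unfold bb; split
  · calc 1 ≤ K := hK
      _ ≤ K * (p+1)^(K-1) := Nat.le_mul_of_pos_right _ (by omega)
  · calc ∑ i ∈ Finset.range (r.toNat + 1), p.choose i
        ≤ ∑ _i ∈ Finset.range (r.toNat + 1), (p + 1) ^ (K - 1) := by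
          refine Finset.sum_le_sum fun i hi => ?_
          have h1 : p.choose i ≤ p ^ i := Nat.choose_le_pow p i
          have h2 : p ^ i ≤ (p+1) ^ i := Nat.pow_le_pow_left (by omega) i
          have h3 : (p+1) ^ i ≤ (p+1) ^ (K-1) :=
            Nat.pow_le_pow_right (by omega) (by simp at hi; omega)
          omega
      _ = (r.toNat + 1) * (p + 1) ^ (K - 1) := by
          rw [Finset.sum_const, Finset.card_range]; ring
      _ ≤ K * (p + 1) ^ (K - 1) := Nat.mul_le_mul_right _ (by omega)

lemma bb_le_poly (p : ℕ) (r : ℤ) (K : ℕ) (h : r.toNat < K) :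
    (bb p r : ℝ) ≤ K * ((p : ℝ) + 1) ^ (K - 1) := by
  have := bb_le_poly_nat p r K h
  calc (bb p r : ℝ) ≤ ((K * (p + 1) ^ (K - 1) : ℕ) : ℝ) := by exact_mod_cast this
    _ = K * ((p : ℝ) + 1) ^ (K - 1) := by push_cast; ring

lemma tendsto_div_two_pow (c : ℕ → ℕ) (A : ℝ) (B : ℕ)
    (hcu : ∀ p, (c p : ℝ) ≤ A * ((p : ℝ) + 1) ^ B) :
    Tendsto (fun p : ℕ => (c p : ℝ) / 2 ^ p) atTop (nhds 0) := by
  have key : Tendsto (fun p : ℕ => A * ((((p + 1 : ℕ)) : ℝ) ^ B / 2 ^ (p + 1)) * 2)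
      atTop (nhds 0) := by
    have h := (tendsto_pow_const_div_const_pow_of_one_lt B
      (by norm_num : (1:ℝ) < 2)).comp (tendsto_add_atTop_nat 1)
    simpa using (h.const_mul A).mul_const 2
  refine squeeze_zero (fun p => by positivity) (fun p => ?_) key
  have h2 : (0:ℝ) < 2 ^ p := by positivity
  have := hcu p
  calc (c p : ℝ) / 2 ^ p ≤ (A * ((p : ℝ) + 1) ^ B) / 2 ^ p := by gcongr
    _ = A * ((((p + 1 : ℕ)) : ℝ) ^ B / 2 ^ (p + 1)) * 2 := by
        push_cast
        rw [pow_succ]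
        field_simp

lemma tendsto_ratio_atTop (c d : ℕ → ℕ) (M : ℕ) (D : ℝ) (hD : 0 < D)
    (hd0 : ∀ p, 0 < d p)
    (hcl : ∀ p, p.choose (M + 1) ≤ c p)
    (hdu : ∀ p, (d p : ℝ) ≤ D * ((p : ℝ) + 1) ^ M) :
    Tendsto (fun p : ℕ => (c p : ℝ) / (d p : ℝ)) atTop atTop := by
  have hfac : (0:ℝ) < ((M+1).factorial : ℝ) := by
    exact_mod_cast (M+1).factorial_pos
  have hK0 : (0:ℝ) < 2 ^ (M + 1) * ((M+1).factorial : ℝ) * D := by positivity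
  have hlin : Tendsto (fun p : ℕ => ((p : ℝ) + 1) / (2 ^ (M + 1) * ((M+1).factorial : ℝ) * D))
      atTop atTop :=
    (tendsto_atTop_add_const_right _ 1 (tendsto_natCast_atTop_atTop (R := ℝ))).atTop_div_const hK0
  refine tendsto_atTop_mono' _ ?_ hlin
  filter_upwards [eventually_ge_atTop (2 * M + 1)] with p hp
  have hd := hd0 p
  have hsub : ((p : ℝ) + 1) / 2 ≤ ((p - M : ℕ) : ℝ) := by
    have h : p + 1 ≤ 2 * (p - M) := by omega
    have h2 := (Nat.cast_le (α := ℝ)).2 h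
    push_cast at h2 ⊢
    linarith
  have hc1 : ((p : ℝ) + 1) ^ (M + 1) / 2 ^ (M + 1) / ((M+1).factorial : ℝ) ≤ (c p : ℝ) := by
    have h1 : (((p + 1 - (M + 1) : ℕ)) ^ (M + 1) : ℝ) / ((M+1).factorial : ℝ) ≤ p.choose (M + 1) :=
      Nat.pow_le_choose (M + 1) p
    have hps : p + 1 - (M + 1) = p - M := by omega
    rw [hps] at h1
    have h2 : ((p : ℝ) + 1) ^ (M + 1) / 2 ^ (M + 1) ≤ ((p - M : ℕ) : ℝ) ^ (M + 1) := by
      rw [← div_pow]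
      exact pow_le_pow_left₀ (by positivity) hsub _
    have h3 : (p.choose (M + 1) : ℝ) ≤ c p := by exact_mod_cast hcl p
    calc ((p : ℝ) + 1) ^ (M + 1) / 2 ^ (M + 1) / ((M+1).factorial : ℝ)
        ≤ ((p - M : ℕ) : ℝ) ^ (M + 1) / ((M+1).factorial : ℝ) := by gcongr
      _ ≤ (p.choose (M + 1) : ℝ) := h1
      _ ≤ _ := h3
  have hdp : (0:ℝ) < (d p : ℝ) := by exact_mod_cast hd
  have main : ((p : ℝ) + 1) ^ (M + 1) / 2 ^ (M + 1) / ((M+1).factorial : ℝ) / (D * ((p : ℝ) + 1) ^ M)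
      ≤ (c p : ℝ) / (d p : ℝ) :=
    div_le_div₀ (by positivity) hc1 hdp (hdu p)
  refine le_trans (le_of_eq ?_) main
  have hp1 : ((p : ℝ) + 1) ≠ 0 := by positivity
  field_simp
  ring

lemma tendsto_term_zero {x : ℝ} (hx : 0 < x) (c d : ℕ → ℕ) (M B : ℕ) (A D : ℝ) (hD : 0 < D)
    (hd0 : ∀ p, 0 < d p)
    (hcl : ∀ p, p.choose (M + 1) ≤ c p)
    (hcu : ∀ p, (c p : ℝ) ≤ A * ((p : ℝ) + 1) ^ B)
    (hdu : ∀ p, (d p : ℝ) ≤ D * ((p : ℝ) + 1) ^ M) :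
    Tendsto (fun p : ℕ => Real.exp (-x * (c p : ℝ) / (d p : ℝ) + (c p : ℝ) / 2 ^ p))
      atTop (nhds 0) := by
  have hratio := tendsto_ratio_atTop c d M D hD hd0 hcl hdu
  have h1 : Tendsto (fun p : ℕ => -x * (c p : ℝ) / (d p : ℝ)) atTop atBot := by
    have h2 : Tendsto (fun p : ℕ => x * ((c p : ℝ) / (d p : ℝ))) atTop atTop :=
      hratio.const_mul_atTop hx
    have h3 : Tendsto (fun p : ℕ => -(x * ((c p : ℝ) / (d p : ℝ)))) atTop atBot :=
      tendsto_neg_atTop_atBot.comp h2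
    refine h3.congr fun p => ?_
    ring
  have h4 := tendsto_div_two_pow c A B hcu
  have h5 : ∀ᶠ p : ℕ in atTop, (c p : ℝ) / 2 ^ p ≤ 1 := by
    filter_upwards [h4.eventually (gt_mem_nhds (by norm_num : (0:ℝ) < 1))] with p hp
    exact le_of_lt hp
  have h6 : Tendsto (fun p : ℕ => -x * (c p : ℝ) / (d p : ℝ) + (c p : ℝ) / 2 ^ p)
      atTop atBot := tendsto_atBot_add_right_of_ge' _ 1 h1 h5
  exact (Real.tendsto_exp_atBot).comp h6

lemma tendsto_term_mid (x : ℝ) (d : ℕ → ℕ) (B : ℕ) (A : ℝ)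
    (hd0 : ∀ p, 0 < d p)
    (hdu : ∀ p, (d p : ℝ) ≤ A * ((p : ℝ) + 1) ^ B) :
    Tendsto (fun p : ℕ => Real.exp (-x * (d p : ℝ) / (d p : ℝ) + (d p : ℝ) / 2 ^ p))
      atTop (nhds (Real.exp (-x))) := by
  have heq : (fun p : ℕ => Real.exp (-x * (d p : ℝ) / (d p : ℝ) + (d p : ℝ) / 2 ^ p))
      = fun p : ℕ => Real.exp (-x + (d p : ℝ) / 2 ^ p) := by
    funext p
    have hdp : ((d p : ℝ)) ≠ 0 := by
      have := hd0 p; positivity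
    rw [mul_div_assoc, div_self hdp, mul_one]
  rw [heq]
  have h4 := tendsto_div_two_pow d A B hdu
  have h5 : Tendsto (fun p : ℕ => -x + (d p : ℝ) / 2 ^ p) atTop (nhds (-x + 0)) :=
    tendsto_const_nhds.add h4
  rw [add_zero] at h5
  exact (Real.continuous_exp.tendsto (-x)).comp h5

noncomputable def G (N : ℕ) (x : ℝ) (p : ℕ) : ℝ :=
  (∑ i ∈ Finset.range N,
      Real.exp (-x * ((bb p ((i : ℤ) - 1) + bb p ((N : ℤ) - i - 1) : ℕ) : ℝ)
            / ((bb p ⌊((N : ℚ) - 1) / 2⌋ + bb p (⌈((N : ℚ) - 1) / 2⌉ - 1) : ℕ) : ℝ)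
          + ((bb p ((i : ℤ) - 1) + bb p ((N : ℤ) - i - 1) : ℕ) : ℝ) / 2 ^ p))
    + Real.exp (-x * ((bb p ((N : ℤ) - 1) : ℕ) : ℝ)
            / ((bb p ⌊((N : ℚ) - 1) / 2⌋ + bb p (⌈((N : ℚ) - 1) / 2⌉ - 1) : ℕ) : ℝ)
          + ((bb p ((N : ℤ) - 1) : ℕ) : ℝ) / 2 ^ p)

lemma G_tendsto_odd (N t : ℕ) (ht : 1 ≤ t) (hNt : N = 2 * t + 1) {x : ℝ} (hx : 0 < x) :
    Filter.Tendsto (G N x) atTop (nhds (2 * Real.exp (-x))) := by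
  subst hNt
  have hfl : ⌊(((2 * t + 1 : ℕ) : ℚ) - 1) / 2⌋ = (t : ℤ) := by
    rw [show (((2 * t + 1 : ℕ) : ℚ) - 1) / 2 = ((t : ℤ) : ℚ) by push_cast; ring,
      Int.floor_intCast]
  have hce : ⌈(((2 * t + 1 : ℕ) : ℚ) - 1) / 2⌉ - 1 = (t : ℤ) - 1 := by
    rw [show (((2 * t + 1 : ℕ) : ℚ) - 1) / 2 = ((t : ℤ) : ℚ) by push_cast; ring,
      Int.ceil_intCast]
  have hd0 : ∀ p, 0 < bb p (t : ℤ) + bb p ((t : ℤ) - 1) := fun p => by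
    have := bb_pos p (t : ℤ); omega
  have hdu : ∀ p : ℕ, ((bb p (t : ℤ) + bb p ((t : ℤ) - 1) : ℕ) : ℝ)
      ≤ (2 * (t + 1) : ℝ) * ((p : ℝ) + 1) ^ t := by
    intro p
    have h1 := bb_le_poly p (t : ℤ) (t + 1) (by simp)
    have h2 := bb_le_poly p ((t : ℤ) - 1) (t + 1) (by omega)
    simp only [Nat.add_sub_cancel] at h1 h2
    push_cast
    push_cast at h1 h2
    linarith
  unfold G
  simp only [hfl, hce]
  have hextra : Filter.Tendsto (fun p : ℕ =>
      Real.exp (-x * ((bb p (((2 * t + 1 : ℕ) : ℤ) - 1) : ℕ) : ℝ)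
          / ((bb p (t : ℤ) + bb p ((t : ℤ) - 1) : ℕ) : ℝ)
        + ((bb p (((2 * t + 1 : ℕ) : ℤ) - 1) : ℕ) : ℝ) / 2 ^ p)) atTop (nhds 0) := by
    refine tendsto_term_zero hx (fun p => bb p (((2 * t + 1 : ℕ) : ℤ) - 1))
      (fun p => bb p (t : ℤ) + bb p ((t : ℤ) - 1)) t (2 * t) (2 * (2 * t + 1) : ℝ)
      (2 * (t + 1) : ℝ) (by positivity) hd0 (fun p => ?_) (fun p => ?_) hdu
    · exact choose_le_bb p _ (t + 1) (by push_cast; omega)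
    · have h1 := bb_le_poly p (((2 * t + 1 : ℕ) : ℤ) - 1) (2 * t + 1) (by push_cast; omega)
      simp only [Nat.add_sub_cancel] at h1
      push_cast at h1 ⊢
      linarith
  have hsum : Filter.Tendsto (fun p : ℕ => ∑ i ∈ Finset.range (2 * t + 1),
      Real.exp (-x * ((bb p ((i : ℤ) - 1) + bb p (((2 * t + 1 : ℕ) : ℤ) - i - 1) : ℕ) : ℝ)
          / ((bb p (t : ℤ) + bb p ((t : ℤ) - 1) : ℕ) : ℝ)
        + ((bb p ((i : ℤ) - 1) + bb p (((2 * t + 1 : ℕ) : ℤ) - i - 1) : ℕ) : ℝ) / 2 ^ p))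
      atTop (nhds (∑ i ∈ Finset.range (2 * t + 1),
        if i = t ∨ i = t + 1 then Real.exp (-x) else 0)) := by
    refine tendsto_finset_sum _ fun i hi => ?_
    rw [Finset.mem_range] at hi
    by_cases h1 : i = t
    · rw [if_pos (Or.inl h1)]
      simp only [h1]
      have harg : ((2 * t + 1 : ℕ) : ℤ) - (t : ℤ) - 1 = (t : ℤ) := by push_cast; ring
      have harg2 : ((t : ℕ) : ℤ) - 1 = (t : ℤ) - 1 := by push_cast; ring
      simp only [harg, harg2]
      have hcomm : ∀ p : ℕ, bb p ((t : ℤ) - 1) + bb p (t : ℤ)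
          = bb p (t : ℤ) + bb p ((t : ℤ) - 1) := fun p => Nat.add_comm _ _
      simp only [hcomm]
      exact tendsto_term_mid x (fun p => bb p (t : ℤ) + bb p ((t : ℤ) - 1)) t
        (2 * (t + 1) : ℝ) hd0 hdu
    · by_cases h2 : i = t + 1
      · rw [if_pos (Or.inr h2)]
        simp only [h2]
        have harg : ((2 * t + 1 : ℕ) : ℤ) - ((t + 1 : ℕ) : ℤ) - 1 = (t : ℤ) - 1 := by
          push_cast; ring
        have harg2 : ((t + 1 : ℕ) : ℤ) - 1 = (t : ℤ) := by push_cast; ring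
        simp only [harg, harg2]
        exact tendsto_term_mid x (fun p => bb p (t : ℤ) + bb p ((t : ℤ) - 1)) t
          (2 * (t + 1) : ℝ) hd0 hdu
      · rw [if_neg (by tauto)]
        refine tendsto_term_zero hx
          (fun p => bb p ((i : ℤ) - 1) + bb p (((2 * t + 1 : ℕ) : ℤ) - i - 1))
          (fun p => bb p (t : ℤ) + bb p ((t : ℤ) - 1)) t (2 * t) (2 * (2 * t + 1) : ℝ)
          (2 * (t + 1) : ℝ) (by positivity) hd0 (fun p => ?_) (fun p => ?_) hdu
        · rcases lt_or_gt_of_ne (fun h => h1 h) with hlt | hgt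
          · calc p.choose (t + 1) ≤ bb p (((2 * t + 1 : ℕ) : ℤ) - i - 1) :=
                choose_le_bb p _ (t + 1) (by push_cast; omega)
              _ ≤ _ := Nat.le_add_left _ _
          · have hge : t + 2 ≤ i := by omega
            calc p.choose (t + 1) ≤ bb p ((i : ℤ) - 1) :=
                choose_le_bb p _ (t + 1) (by push_cast; omega)
              _ ≤ _ := Nat.le_add_right _ _
        · have h3 := bb_le_poly p ((i : ℤ) - 1) (2 * t + 1) (by push_cast; omega)
          have h4 := bb_le_poly p (((2 * t + 1 : ℕ) : ℤ) - i - 1) (2 * t + 1)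
            (by push_cast; omega)
          simp only [Nat.add_sub_cancel] at h3 h4
          push_cast at h3 h4 ⊢
          linarith
  have htot := hsum.add hextra
  have hval : (∑ i ∈ Finset.range (2 * t + 1),
      if i = t ∨ i = t + 1 then Real.exp (-x) else 0) + 0 = 2 * Real.exp (-x) := by
    rw [add_zero]
    have hsplit : ∀ i : ℕ, (if i = t ∨ i = t + 1 then Real.exp (-x) else 0)
        = (if i = t then Real.exp (-x) else 0) + (if i = t + 1 then Real.exp (-x) else 0) := by
      intro i
      by_cases h1 : i = t <;> by_cases h2 : i = t + 1 <;> simp [h1, h2] <;> omega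
    simp only [hsplit]
    rw [Finset.sum_add_distrib, Finset.sum_ite_eq' (Finset.range (2 * t + 1)) t,
      Finset.sum_ite_eq' (Finset.range (2 * t + 1)) (t + 1),
      if_pos (Finset.mem_range.2 (by omega)), if_pos (Finset.mem_range.2 (by omega))]
    ring
  rwa [hval] at htot

lemma G_tendsto_even (N t : ℕ) (hNt : N = 2 * t + 2) {x : ℝ} (hx : 0 < x) :
    Filter.Tendsto (G N x) atTop (nhds (Real.exp (-x))) := by
  subst hNt
  have hfl : ⌊(((2 * t + 2 : ℕ) : ℚ) - 1) / 2⌋ = (t : ℤ) := by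
    rw [Int.floor_eq_iff]
    constructor <;> push_cast <;> linarith
  have hce : ⌈(((2 * t + 2 : ℕ) : ℚ) - 1) / 2⌉ - 1 = (t : ℤ) := by
    have : ⌈(((2 * t + 2 : ℕ) : ℚ) - 1) / 2⌉ = (t : ℤ) + 1 := by
      rw [Int.ceil_eq_iff]
      constructor <;> push_cast <;> linarith
    omega
  have hd0 : ∀ p, 0 < bb p (t : ℤ) + bb p (t : ℤ) := fun p => by
    have := bb_pos p (t : ℤ); omega
  have hdu : ∀ p : ℕ, ((bb p (t : ℤ) + bb p (t : ℤ) : ℕ) : ℝ)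
      ≤ (2 * (t + 1) : ℝ) * ((p : ℝ) + 1) ^ t := by
    intro p
    have h1 := bb_le_poly p (t : ℤ) (t + 1) (by simp)
    simp only [Nat.add_sub_cancel] at h1
    push_cast
    push_cast at h1
    linarith
  unfold G
  simp only [hfl, hce]
  have hextra : Filter.Tendsto (fun p : ℕ =>
      Real.exp (-x * ((bb p (((2 * t + 2 : ℕ) : ℤ) - 1) : ℕ) : ℝ)
          / ((bb p (t : ℤ) + bb p (t : ℤ) : ℕ) : ℝ)
        + ((bb p (((2 * t + 2 : ℕ) : ℤ) - 1) : ℕ) : ℝ) / 2 ^ p)) atTop (nhds 0) := by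
    refine tendsto_term_zero hx (fun p => bb p (((2 * t + 2 : ℕ) : ℤ) - 1))
      (fun p => bb p (t : ℤ) + bb p (t : ℤ)) t (2 * t + 1) (2 * (2 * t + 2) : ℝ)
      (2 * (t + 1) : ℝ) (by positivity) hd0 (fun p => ?_) (fun p => ?_) hdu
    · exact choose_le_bb p _ (t + 1) (by push_cast; omega)
    · have h1 := bb_le_poly p (((2 * t + 2 : ℕ) : ℤ) - 1) (2 * t + 2) (by push_cast; omega)
      rw [show 2 * t + 2 - 1 = 2 * t + 1 by omega] at h1
      push_cast at h1 ⊢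
      linarith
  have hsum : Filter.Tendsto (fun p : ℕ => ∑ i ∈ Finset.range (2 * t + 2),
      Real.exp (-x * ((bb p ((i : ℤ) - 1) + bb p (((2 * t + 2 : ℕ) : ℤ) - i - 1) : ℕ) : ℝ)
          / ((bb p (t : ℤ) + bb p (t : ℤ) : ℕ) : ℝ)
        + ((bb p ((i : ℤ) - 1) + bb p (((2 * t + 2 : ℕ) : ℤ) - i - 1) : ℕ) : ℝ) / 2 ^ p))
      atTop (nhds (∑ i ∈ Finset.range (2 * t + 2),
        if i = t + 1 then Real.exp (-x) else 0)) := by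
    refine tendsto_finset_sum _ fun i hi => ?_
    rw [Finset.mem_range] at hi
    by_cases h1 : i = t + 1
    · rw [if_pos h1]
      simp only [h1]
      have harg : ((2 * t + 2 : ℕ) : ℤ) - ((t + 1 : ℕ) : ℤ) - 1 = (t : ℤ) := by
        push_cast; ring
      have harg2 : ((t + 1 : ℕ) : ℤ) - 1 = (t : ℤ) := by push_cast; ring
      simp only [harg, harg2]
      exact tendsto_term_mid x (fun p => bb p (t : ℤ) + bb p (t : ℤ)) t
        (2 * (t + 1) : ℝ) hd0 hdu
    · rw [if_neg h1]
      refine tendsto_term_zero hx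
        (fun p => bb p ((i : ℤ) - 1) + bb p (((2 * t + 2 : ℕ) : ℤ) - i - 1))
        (fun p => bb p (t : ℤ) + bb p (t : ℤ)) t (2 * t + 1) (2 * (2 * t + 2) : ℝ)
        (2 * (t + 1) : ℝ) (by positivity) hd0 (fun p => ?_) (fun p => ?_) hdu
      · rcases lt_or_gt_of_ne h1 with hlt | hgt
        · calc p.choose (t + 1) ≤ bb p (((2 * t + 2 : ℕ) : ℤ) - i - 1) :=
              choose_le_bb p _ (t + 1) (by push_cast; omega)
            _ ≤ _ := Nat.le_add_left _ _
        · calc p.choose (t + 1) ≤ bb p ((i : ℤ) - 1) :=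
              choose_le_bb p _ (t + 1) (by push_cast; omega)
            _ ≤ _ := Nat.le_add_right _ _
      · have h3 := bb_le_poly p ((i : ℤ) - 1) (2 * t + 2) (by push_cast; omega)
        have h4 := bb_le_poly p (((2 * t + 2 : ℕ) : ℤ) - i - 1) (2 * t + 2)
          (by push_cast; omega)
        rw [show 2 * t + 2 - 1 = 2 * t + 1 by omega] at h3 h4
        push_cast at h3 h4 ⊢
        linarith
  have htot := hsum.add hextra
  have hval : (∑ i ∈ Finset.range (2 * t + 2),
      if i = t + 1 then Real.exp (-x) else 0) + 0 = Real.exp (-x) := by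
    rw [add_zero, Finset.sum_ite_eq' (Finset.range (2 * t + 2)) (t + 1),
      if_pos (Finset.mem_range.2 (by omega))]
  rwa [hval] at htot

lemma tau_eq_G (n N : ℕ) (x : ℝ) : tau n N x = 2 ^ (n + 1) * G N x (n - 1) := by
  simp only [tau, G]
  ring

theorem tau_asymptotic (N : ℕ) (hN : 2 ≤ N) (x : ℝ) (hx : 0 < x) :
    (Odd N → Filter.Tendsto (fun n : ℕ => tau n N x / (2 ^ (n + 2) * Real.exp (-x)))
      Filter.atTop (nhds 1)) ∧
    (Even N → Filter.Tendsto (fun n : ℕ => tau n N x / (2 ^ (n + 1) * Real.exp (-x)))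
      Filter.atTop (nhds 1)) := by
  have hexp : Real.exp (-x) ≠ 0 := (Real.exp_pos _).ne'
  constructor
  · intro hodd
    obtain ⟨t, ht⟩ := hodd
    have ht' : N = 2 * t + 1 := by omega
    have ht1 : 1 ≤ t := by omega
    have hG := (G_tendsto_odd N t ht1 ht' hx).comp (tendsto_sub_atTop_nat 1)
    have h2 := hG.div_const (2 * Real.exp (-x))
    rw [div_self (by positivity)] at h2
    refine h2.congr fun n => ?_
    rw [tau_eq_G]
    have hpne : ((2 : ℝ) ^ (n + 1)) ≠ 0 := by positivity
    field_simp
    rw [Function.comp_apply]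
    ring
  · intro heven
    obtain ⟨r, hr⟩ := heven
    have ht' : N = 2 * (r - 1) + 2 := by omega
    have hG := (G_tendsto_even N (r - 1) ht' hx).comp (tendsto_sub_atTop_nat 1)
    have h2 := hG.div_const (Real.exp (-x))
    rw [div_self hexp] at h2
    refine h2.congr fun n => ?_
    rw [tau_eq_G]
    have hpne : ((2 : ℝ) ^ (n + 1)) ≠ 0 := by positivity
    field_simp
    rfl
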